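/- Let Q be an acyclic conjunctive query. There exists an atom of Q whose variable set contains all free variables of Q if and only if the maximum number of pairwise independent free variables of Q is at most 1. -/

import Mathlib

open SimpleGraph Walk

section lemmas
variable {ι : Type*} {G : SimpleGraph ι}

/-- Split a walk at the first vertex belonging to a set `s`. -/
lemma split_firstIn (s : Set ι) [DecidablePred (· ∈ s)] :
    ∀ {a b : ι} (w : G.Walk a b), (∃ x ∈ w.support, x ∈ s) →
    ∃ (m : ι) (w1 : G.Walk a m) (w2 : G.Walk m b),
      w1.append w2 = w ∧ m ∈ s ∧ ∀ x ∈ w1.support, x ∈ s → x = m := by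
  intro a b w
  induction w with
  | nil =>
    rintro ⟨x, hx, hxs⟩
    simp only [support_nil, List.mem_singleton] at hx
    subst hx
    exact ⟨x, Walk.nil, Walk.nil, rfl, hxs, by simp⟩
  | @cons u v b hadj w' ih =>
    rintro ⟨x, hx, hxs⟩
    by_cases hus : u ∈ s
    · exact ⟨u, Walk.nil, Walk.cons hadj w', rfl, hus, by simp⟩
    · have hx' : x ∈ w'.support := by
        rcases (by simpa using hx : x = u ∨ x ∈ w'.support) with h | h
        · exact absurd (h ▸ hxs) hus
        · exact h
      obtain ⟨m, w1, w2, heq, hm, hlast⟩ := ih ⟨x, hx', hxs⟩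
      refine ⟨m, Walk.cons hadj w1, w2, by rw [cons_append, heq], hm, ?_⟩
      intro y hy hys
      rcases (by simpa using hy : y = u ∨ y ∈ w1.support) with h | h
      · exact absurd (h ▸ hys) hus
      · exact hlast y h hys

/-- Median: given paths `a → b` and `a → c`, there is a path `b → c` and a vertex `m`
on all three, with the new path inside the union of supports. -/
lemma median {a b c : ι} (p : G.Walk a b) (q : G.Walk a c)
    (hp : p.IsPath) (hq : q.IsPath) :
    ∃ (m : ι) (r : G.Walk b c), r.IsPath ∧ m ∈ p.support ∧ m ∈ q.support ∧
      m ∈ r.support ∧ ∀ x ∈ r.support, x ∈ p.support ∨ x ∈ q.support := by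
  classical
  obtain ⟨m, w1, w2, heq, hm, hlast⟩ :=
    split_firstIn (s := {x | x ∈ q.support}) p.reverse
      ⟨a, by simp, by simp⟩
  have hw1sub : ∀ x ∈ w1.support, x ∈ p.support := by
    intro x hx
    have : x ∈ (w1.append w2).support := subset_support_append_left _ _ hx
    rw [heq, support_reverse] at this
    simpa using this
  have hw1path : w1.IsPath := by
    have := hp.reverse
    rw [← heq] at this
    exact this.of_append_left
  have hdrop : (q.dropUntil m hm).IsPath := hq.dropUntil hm
  set r : G.Walk b c := w1.append (q.dropUntil m hm) with hr
  have hrsupp : r.support = w1.support ++ (q.dropUntil m hm).support.tail :=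
    support_append _ _
  have hmnot : m ∉ (q.dropUntil m hm).support.tail := by
    have hnd := hdrop.support_nodup
    rw [support_eq_cons] at hnd
    exact (List.nodup_cons.mp hnd).1
  have hdisj : ∀ x ∈ w1.support, x ∉ (q.dropUntil m hm).support.tail := by
    intro x hx hxt
    have hxq : x ∈ q.support :=
      support_dropUntil_subset q hm (List.mem_of_mem_tail hxt)
    have : x = m := hlast x hx hxq
    exact hmnot (this ▸ hxt)
  have hrpath : r.IsPath := by
    rw [isPath_def, hrsupp]
    refine List.Nodup.append hw1path.support_nodup hdrop.support_nodup.tail ?_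
    intro x hx hxt
    exact hdisj x hx hxt
  refine ⟨m, r, hrpath, hw1sub m w1.end_mem_support, hm, ?_, ?_⟩
  · rw [mem_support_append_iff]
    exact Or.inl w1.end_mem_support
  · intro x hx
    rw [hrsupp, List.mem_append] at hx
    rcases hx with hx | hx
    · exact Or.inl (hw1sub x hx)
    · exact Or.inr (support_dropUntil_subset q hm (List.mem_of_mem_tail hx))

/-- Path-closed sets in a graph. -/
def PC (G : SimpleGraph ι) (s : Set ι) : Prop :=
  ∀ a ∈ s, ∀ b ∈ s, ∀ p : G.Walk a b, p.IsPath → ∀ x ∈ p.support, x ∈ s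

lemma PC.inter {s t : Set ι} (hs : PC G s) (ht : PC G t) : PC G (s ∩ t) :=
  fun a ha b hb p hp x hx => ⟨hs a ha.1 b hb.1 p hp x hx, ht a ha.2 b hb.2 p hp x hx⟩

lemma helly3 (hG : G.Preconnected) {s t u : Set ι}
    (hs : PC G s) (ht : PC G t) (hu : PC G u)
    (hst : (s ∩ t).Nonempty) (hsu : (s ∩ u).Nonempty) (htu : (t ∩ u).Nonempty) :
    (s ∩ t ∩ u).Nonempty := by
  classical
  obtain ⟨a, has, hat⟩ := hst
  obtain ⟨b, hbs, hbu⟩ := hsu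
  obtain ⟨c, hct, hcu⟩ := htu
  obtain ⟨wp⟩ := hG a b
  obtain ⟨wq⟩ := hG a c
  obtain ⟨m, r, hr, hmp, hmq, hmr, _⟩ :=
    median wp.toPath.val wq.toPath.val wp.toPath.prop wq.toPath.prop
  exact ⟨m, ⟨⟨hs a has b hbs _ wp.toPath.prop m hmp,
      ht a hat c hct _ wq.toPath.prop m hmq⟩,
      hu b hbu c hcu r hr m hmr⟩⟩

lemma helly_finset {V : Type*} [Nonempty ι] (hG : G.Preconnected)
    (F : Finset V) (S : V → Set ι)
    (hPC : ∀ v ∈ F, PC G (S v))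
    (hpair : ∀ u ∈ F, ∀ v ∈ F, (S u ∩ S v).Nonempty) :
    ∃ i, ∀ v ∈ F, i ∈ S v := by
  classical
  induction F using Finset.induction_on generalizing S with
  | empty => exact ⟨Classical.arbitrary ι, by simp⟩
  | @insert a F ha ih =>
    rcases F.eq_empty_or_nonempty with rfl | ⟨v₀, hv₀⟩
    · obtain ⟨i, hi, _⟩ := hpair a (by simp) a (by simp)
      exact ⟨i, by simpa using hi⟩
    · obtain ⟨i, hi⟩ := ih (fun v => S v ∩ S a)
        (fun v hv => (hPC v (Finset.mem_insert_of_mem hv)).inter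
          (hPC a (Finset.mem_insert_self a F)))
        (fun x hx y hy => by
          have h3 := helly3 hG (hPC x (Finset.mem_insert_of_mem hx))
            (hPC y (Finset.mem_insert_of_mem hy)) (hPC a (Finset.mem_insert_self a F))
            (hpair x (Finset.mem_insert_of_mem hx) y (Finset.mem_insert_of_mem hy))
            (hpair x (Finset.mem_insert_of_mem hx) a (Finset.mem_insert_self a F))
            (hpair y (Finset.mem_insert_of_mem hy) a (Finset.mem_insert_self a F))
          obtain ⟨m, ⟨⟨h1, h2⟩, h3⟩⟩ := h3
          exact ⟨m, ⟨h1, h3⟩, ⟨h2, h3⟩⟩)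
      refine ⟨i, ?_⟩
      intro v hv
      rcases Finset.mem_insert.mp hv with rfl | hv
      · exact (hi v₀ hv₀).2
      · exact (hi v hv).1

end lemmas

/-- Two vertices are neighbors in a hypergraph if some hyperedge contains both. -/
def Nbr {V : Type*} (E : Finset (Finset V)) (x y : V) : Prop :=
  ∃ e ∈ E, x ∈ e ∧ y ∈ e

/-- `T` with labels `lab` is a join tree of the hypergraph with hyperedge set `E`:
it is a tree whose nodes are (exactly) the hyperedges, satisfying the running
intersection property (for every vertex, the nodes containing it form a connected
subtree). -/
def IsJoinTreeOf {V ι : Type*} (T : SimpleGraph ι) (lab : ι → Finset V)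
    (E : Finset (Finset V)) : Prop :=
  T.IsTree ∧ (∀ i, lab i ∈ E) ∧ (∀ e ∈ E, ∃ i, lab i = e) ∧
    ∀ v : V, (T.induce {i | v ∈ lab i}).Preconnected

/-- A hypergraph is acyclic if it admits a join tree. -/
def HGAcyclic {V : Type*} (E : Finset (Finset V)) : Prop :=
  ∃ (ι : Type) (T : SimpleGraph ι) (lab : ι → Finset V), IsJoinTreeOf T lab E

/-- For an acyclic conjunctive query (modeled by its hypergraph `E`
with free variables `free`, each free variable occurring in some atom), some atom
contains all free variables iff every independent set of free variables has at most
one element (`α_free(Q) ≤ 1`). -/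
theorem atom_contains_free_iff_alpha_le_one {V : Type*} [DecidableEq V]
    (E : Finset (Finset V)) (free : Finset V)
    (hE : E.Nonempty)
    (hfree : ∀ v ∈ free, ∃ e ∈ E, v ∈ e)
    (hacyc : HGAcyclic E) :
    (∃ e ∈ E, free ⊆ e) ↔
      ∀ S : Finset V, S ⊆ free →
        (∀ x ∈ S, ∀ y ∈ S, x ≠ y → ¬ Nbr E x y) → S.card ≤ 1 := by
  classical
  constructor
  · rintro ⟨e, he, hsub⟩ S hS hind
    by_contra h
    obtain ⟨x, hx, y, hy, hxy⟩ := Finset.one_lt_card.mp (lt_of_not_ge h)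
    exact hind x hx y hy hxy ⟨e, he, hsub (hS hx), hsub (hS hy)⟩
  · intro h
    obtain ⟨ι, T, lab, htree, hlab, hsurj, hconn⟩ := hacyc
    haveI : Nonempty ι := htree.isConnected.nonempty
    obtain ⟨_, huniq⟩ := SimpleGraph.isTree_iff_existsUnique_path.mp htree
    set Sv : V → Set ι := fun v => {i | v ∈ lab i} with hSv
    -- each Sv v is path-closed
    have hPC : ∀ v ∈ free, PC T (Sv v) := by
      intro v _ a ha b hb p hp x hx
      obtain ⟨w⟩ := hconn v ⟨a, ha⟩ ⟨b, hb⟩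
      have hw : ∀ y ∈ (w.map (SimpleGraph.Embedding.induce (Sv v)).toHom).support,
          y ∈ Sv v := by
        intro y hy
        rw [Walk.support_map] at hy
        obtain ⟨z, _, rfl⟩ := List.mem_map.mp hy
        exact z.2
      have hpeq : p = (w.map (SimpleGraph.Embedding.induce (Sv v)).toHom).bypass := by
        obtain ⟨r, _, hr⟩ := huniq a b
        exact (hr p hp).trans (hr _ (Walk.bypass_isPath _)).symm
      exact hw _ (Walk.support_bypass_subset _ (hpeq ▸ hx))
    -- pairwise intersections
    have hpair : ∀ u ∈ free, ∀ v ∈ free, (Sv u ∩ Sv v).Nonempty := by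
      intro u hu v hv
      rcases eq_or_ne u v with rfl | huv
      · obtain ⟨e, he, hue⟩ := hfree u hu
        obtain ⟨i, rfl⟩ := hsurj e he
        exact ⟨i, hue, hue⟩
      · have hnbr : Nbr E u v := by
          by_contra hn
          have hcard : ({u, v} : Finset V).card ≤ 1 := by
            refine h {u, v} ?_ ?_
            · intro z hz
              rcases Finset.mem_insert.mp hz with rfl | hz
              · exact hu
              · exact (Finset.mem_singleton.mp hz) ▸ hv
            · intro x hx y hy hxy hne
              rcases Finset.mem_insert.mp hx with rfl | hx' <;>
                rcases Finset.mem_insert.mp hy with rfl | hy'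
              · exact hxy rfl
              · exact hn ((Finset.mem_singleton.mp hy') ▸ hne)
              · have := Finset.mem_singleton.mp hx'
                subst this
                rcases hne with ⟨e, he, hx1, hy1⟩
                exact hn ⟨e, he, hy1, hx1⟩
              · have h1 := Finset.mem_singleton.mp hx'
                have h2 := Finset.mem_singleton.mp hy'
                exact hxy (h1.trans h2.symm)
          rw [Finset.card_insert_of_notMem (by simpa using huv),
            Finset.card_singleton] at hcard
          omega
        obtain ⟨e, he, hue, hve⟩ := hnbr
        obtain ⟨i, rfl⟩ := hsurj e he
        exact ⟨i, hue, hve⟩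
    obtain ⟨i, hi⟩ := helly_finset htree.isConnected.preconnected free Sv hPC hpair
    exact ⟨lab i, hlab i, fun v hv => hi v hv⟩
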